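/- Let μ be a centered Gaussian measure on a real separable Hilbert space H with finite second moment. Then the covariance operator K_μ is trace class, with trace equal to ∫_H ‖x‖² dμ(x). -/

import Mathlib

open MeasureTheory ProbabilityTheory Filter
open scoped RealInnerProductSpace NNReal ENNReal

/-- The covariance operator of a centered Gaussian measure with finite second
moment is trace class, with trace `∫ ‖x‖² dμ`. -/
theorem covariance_operator_traceClass
    {H : Type*} [NormedAddCommGroup H] [InnerProductSpace ℝ H] [CompleteSpace H]
    [TopologicalSpace.SeparableSpace H] [MeasurableSpace H] [BorelSpace H]
    (μ : Measure H) [IsProbabilityMeasure μ]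
    (hgauss : ∀ f : H, ∃ v : ℝ≥0, μ.map (fun x => ⟪x, f⟫) = gaussianReal 0 v)
    (hmom : MemLp (fun x : H => x) 2 μ)
    (K : H →ₗ[ℝ] H)
    (hK : ∀ f g : H, ⟪K f, g⟫ = ∫ x, ⟪x, f⟫ * ⟪x, g⟫ ∂μ) :
    ∀ (ι : Type) (e : HilbertBasis ι ℝ H),
      Summable (fun i => ⟪K (e i), e i⟫) ∧
      ∑' i, ⟪K (e i), e i⟫ = ∫ x, ‖x‖ ^ 2 ∂μ := by
  intro ι e
  -- Parseval
  have hsum : ∀ x : H, HasSum (fun i => ⟪x, e i⟫ * ⟪x, e i⟫) (‖x‖ ^ 2) := by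
    intro x
    have h := e.hasSum_inner_mul_inner x x
    rw [real_inner_self_eq_norm_sq] at h
    refine h.congr_fun fun i => ?_
    rw [real_inner_comm]
  have hmeas : ∀ i, Measurable fun x : H => ⟪x, e i⟫ * ⟪x, e i⟫ := fun i =>
    ((continuous_id.inner continuous_const).mul
      (continuous_id.inner continuous_const)).measurable
  have hcount : Countable ι := by
    have horth := e.orthonormal
    refine Pairwise.countable_of_isOpen_disjoint
      (s := fun i => Metric.ball (e i) (1/2)) ?_ (fun i => Metric.isOpen_ball)
      (fun i => ⟨e i, by simp⟩)
    intro i j hij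
    refine Metric.ball_disjoint_ball ?_
    have hn : ‖e i - e j‖ ^ 2 = 2 := by
      rw [norm_sub_sq_real, horth.2 hij]
      simp [horth.1 i, horth.1 j]
      norm_num
    have h0 := norm_nonneg (e i - e j)
    rw [dist_eq_norm]
    nlinarith
  set F : ι → ℝ≥0∞ := fun i => ∫⁻ x, ENNReal.ofReal (⟪x, e i⟫ * ⟪x, e i⟫) ∂μ with hF
  have key : ∑' i, F i = ∫⁻ x, ENNReal.ofReal (‖x‖ ^ 2) ∂μ := by
    rw [← lintegral_tsum (fun i => ((hmeas i).ennreal_ofReal).aemeasurable)]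
    congr 1
    funext x
    rw [← ENNReal.ofReal_tsum_of_nonneg (fun i => mul_self_nonneg _) (hsum x).summable,
      (hsum x).tsum_eq]
  have hint : Integrable (fun x : H => ‖x‖ ^ 2) μ := by
    have h := hmom.integrable_norm_rpow (by norm_num) (by norm_num)
    simpa [ENNReal.toReal_ofNat, Real.rpow_natCast] using h
  have hfin : ∑' i, F i ≠ ⊤ := by
    rw [key]
    exact hint.lintegral_lt_top.ne
  have hFi : ∀ i, F i ≠ ⊤ := fun i => ENNReal.ne_top_of_tsum_ne_top hfin i
  have hKi : ∀ i, ⟪K (e i), e i⟫ = (F i).toReal := by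
    intro i
    rw [hK]
    rw [integral_eq_lintegral_of_nonneg_ae (Filter.Eventually.of_forall fun x =>
      mul_self_nonneg _) (hmeas i).aestronglyMeasurable]
  have hnorm : ∫ x, ‖x‖ ^ 2 ∂μ = (∫⁻ x, ENNReal.ofReal (‖x‖ ^ 2) ∂μ).toReal := by
    rw [integral_eq_lintegral_of_nonneg_ae (Filter.Eventually.of_forall fun x =>
      sq_nonneg _) (measurable_norm.pow_const 2).aestronglyMeasurable]
  constructor
  · simp only [hKi]
    exact ENNReal.summable_toReal hfin
  · simp only [hKi]
    rw [← ENNReal.tsum_toReal_eq hFi, key, hnorm]
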